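/- As ε → 0⁺, ã₊(ε) − (ã₊(ε) + a₋(ε))·q(ε) = (b d²/Σ)·ε² + O(ε³), and consequently (1/b)·(ã₊(ε) − (ã₊(ε) + a₋(ε))·q(ε)) = (d²/Σ)·ε² + O(ε³). -/

import Mathlib

set_option maxHeartbeats 2000000

lemma id0 (c u v : ℝ) (hc : c ≠ 0) (hw : u + v ≠ 0) :
    Real.exp (-(c*v)) * Real.sinh (c*u) / Real.sinh (c*(u+v))
      = (Real.exp (2*c*u) - 1)/(Real.exp (2*c*(u+v)) - 1) := by
  have hs : Real.sinh (c*(u+v)) ≠ 0 := by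
    rw [Real.sinh_ne_zero]; exact mul_ne_zero hc hw
  have hE : Real.exp (2*c*(u+v)) - 1 ≠ 0 := by
    intro h
    have : Real.exp (2*c*(u+v)) = Real.exp 0 := by rw [Real.exp_zero]; linarith
    exact (mul_ne_zero (mul_ne_zero two_ne_zero hc) hw) (Real.exp_injective this)
  have e1 : Real.exp (2*c*u) = Real.exp (c*u) * Real.exp (c*u) := by
    rw [← Real.exp_add]; ring_nf
  have e2 : Real.exp (2*c*(u+v)) = Real.exp (c*u) * Real.exp (c*u) * (Real.exp (c*v) * Real.exp (c*v)) := by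
    rw [← Real.exp_add, ← Real.exp_add, ← Real.exp_add]; ring_nf
  have e3 : Real.exp (c*(u+v)) = Real.exp (c*u) * Real.exp (c*v) := by
    rw [← Real.exp_add]; ring_nf
  have e4 : Real.exp (-(c*u)) = (Real.exp (c*u))⁻¹ := Real.exp_neg _
  have e5 : Real.exp (-(c*v)) = (Real.exp (c*v))⁻¹ := Real.exp_neg _
  have e6 : Real.exp (-(c*(u+v))) = (Real.exp (c*u) * Real.exp (c*v))⁻¹ := by
    rw [Real.exp_neg, e3]
  have ha := Real.exp_ne_zero (c*u)
  have hp := Real.exp_ne_zero (c*v)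
  simp only [Real.sinh_eq] at hs ⊢
  rw [e2] at hE
  rw [e3, e6] at hs
  rw [e1, e2, e3, e4, e5, e6]
  set A := Real.exp (c*u)
  set P := Real.exp (c*v)
  have hs' : A * P * (A * P) - 1 ≠ 0 := by
    intro h; apply hs
    field_simp
    nlinarith [mul_ne_zero ha hp]
  field_simp

lemma id1 (b Sig u v : ℝ) (hb : b ≠ 0) (hSig : 0 < Sig) (hw : 0 < u + v) :
    Real.exp (-(b*v)/Sig) * Real.sinh (u*|b|/Sig) / Real.sinh ((u+v)*|b|/Sig)
      = (Real.exp (2*(b/Sig)*u) - 1)/(Real.exp (2*(b/Sig)*(u+v)) - 1) := by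
  have hc : b/Sig ≠ 0 := div_ne_zero hb hSig.ne'
  have h1 : -(b*v)/Sig = -((b/Sig)*v) := by ring
  rcases hb.lt_or_gt with h | h
  · have h2 : u*|b|/Sig = -((b/Sig)*u) := by rw [abs_of_neg h]; ring
    have h3 : (u+v)*|b|/Sig = -((b/Sig)*(u+v)) := by rw [abs_of_neg h]; ring
    rw [h1, h2, h3, Real.sinh_neg, Real.sinh_neg, mul_neg, neg_div_neg_eq]
    exact id0 (b/Sig) u v hc hw.ne'
  · have h2 : u*|b|/Sig = (b/Sig)*u := by rw [abs_of_pos h]; ring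
    have h3 : (u+v)*|b|/Sig = (b/Sig)*(u+v) := by rw [abs_of_pos h]; ring
    rw [h1, h2, h3]
    exact id0 (b/Sig) u v hc hw.ne'


lemma exp_cubic (x : ℝ) (hx : |x| ≤ 1) : |Real.exp x - (1 + x + x^2/2)| ≤ |x|^3 := by
  have h := Real.exp_bound hx (n := 3) (by norm_num)
  simp [Finset.sum_range_succ] at h
  have h2 : (0:ℝ) ≤ |x|^3 := by positivity
  calc |Real.exp x - (1 + x + x^2/2)| = |Real.exp x - (1 + x + x^2/2 * 1)| := by ring_nf
    _ ≤ |x|^3 * (4 / (6 * 3)) := by convert h using 2 <;> norm_num [Nat.factorial]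
    _ ≤ |x|^3 := by nlinarith

lemma main_est (c d K ε u v : ℝ) (hc : c ≠ 0) (hd : 0 < d) (hK : 1 ≤ K) (hε : 0 < ε)
    (hu : |u - d*ε| ≤ K*ε^2) (hv : |v - d*ε| ≤ K*ε^2)
    (hε1 : ε ≤ d/(2*K)) (hε2 : ε ≤ 1/(16*(|c|+1)*d)) :
    0 < u ∧ 0 < u + v ∧
    |u - (u+v) * ((Real.exp (2*c*u) - 1)/(Real.exp (2*c*(u+v)) - 1)) - c*d^2*ε^2|
      ≤ (24*c^2*d^2*K + 1344* |c|^3*d^4) / (|c| * d) * ε^3 := by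
  have hK0 : (0:ℝ) < K := lt_of_lt_of_le one_pos hK
  obtain ⟨hu1, hu2⟩ := abs_le.mp hu
  obtain ⟨hv1, hv2⟩ := abs_le.mp hv
  have hKd : K * ε ≤ d / 2 := by
    have h := mul_le_mul_of_nonneg_left hε1 hK0.le
    rwa [show K * (d/(2*K)) = d/2 by field_simp] at h
  have hKe : K * ε^2 ≤ d*ε/2 := by nlinarith
  have hul : d*ε/2 ≤ u := by nlinarith
  have huu : u ≤ 2*d*ε := by nlinarith
  have hvl : d*ε/2 ≤ v := by nlinarith
  have hvu : v ≤ 2*d*ε := by nlinarith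
  have hu0 : 0 < u := by nlinarith
  have hv0 : 0 < v := by nlinarith
  have hw0 : 0 < u + v := by nlinarith
  have hcabs : 0 < |c| := abs_pos.mpr hc
  have hkey : ε * (16*(|c|+1)*d) ≤ 1 := by
    rw [← le_div_iff₀ (by positivity)]; exact hε2
  have hsval : |2*c*(u+v)| = 2* |c| * (u+v) := by
    rw [abs_mul, abs_mul, abs_two, abs_of_pos hw0]
  have htval : |2*c*u| = 2* |c| * u := by
    rw [abs_mul, abs_mul, abs_two, abs_of_pos hu0]
  have hs8 : |2*c*(u+v)| ≤ 8* |c| * d*ε := by rw [hsval]; nlinarith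
  have ht8 : |2*c*u| ≤ 4* |c| * d*ε := by rw [htval]; nlinarith
  have hshalf : |2*c*(u+v)| ≤ 1/2 := by
    nlinarith [mul_pos hd hε, mul_pos (mul_pos hcabs hd) hε]
  have hthalf : |2*c*u| ≤ 1/2 := by
    nlinarith [mul_pos hd hε, mul_pos (mul_pos hcabs hd) hε]
  have hDs : |Real.exp (2*c*(u+v)) - 1 - 2*c*(u+v)| ≤ (2*c*(u+v))^2 :=
    Real.abs_exp_sub_one_sub_id_le (le_trans hshalf (by norm_num))
  have hslow : 2* |c| * d*ε ≤ |2*c*(u+v)| := by rw [hsval]; nlinarith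
  have hD_low : |c| * d*ε ≤ |Real.exp (2*c*(u+v)) - 1| := by
    have h1 : |2*c*(u+v)| - |Real.exp (2*c*(u+v)) - 1|
        ≤ |2*c*(u+v) - (Real.exp (2*c*(u+v)) - 1)| := abs_sub_abs_le_abs_sub _ _
    have h2 : |2*c*(u+v) - (Real.exp (2*c*(u+v)) - 1)|
        = |Real.exp (2*c*(u+v)) - 1 - 2*c*(u+v)| := by rw [abs_sub_comm]
    have h3 : (2*c*(u+v))^2 = |2*c*(u+v)| * |2*c*(u+v)| := by
      rw [← abs_mul, abs_of_nonneg (mul_self_nonneg _)]; ring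
    nlinarith [mul_le_mul_of_nonneg_left hshalf (abs_nonneg (2*c*(u+v)))]
  have hD0 : Real.exp (2*c*(u+v)) - 1 ≠ 0 := by
    intro h; rw [h, abs_zero] at hD_low; nlinarith
  have hRs : |Real.exp (2*c*(u+v)) - (1 + 2*c*(u+v) + (2*c*(u+v))^2/2)| ≤ |2*c*(u+v)|^3 :=
    exp_cubic _ (le_trans hshalf (by norm_num))
  have hRt : |Real.exp (2*c*u) - (1 + 2*c*u + (2*c*u)^2/2)| ≤ |2*c*u|^3 :=
    exp_cubic _ (le_trans hthalf (by norm_num))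
  refine ⟨hu0, hw0, ?_⟩
  have hX : u - (u+v) * ((Real.exp (2*c*u) - 1)/(Real.exp (2*c*(u+v)) - 1)) - c*d^2*ε^2
      = (u*(Real.exp (2*c*(u+v)) - 1) - (u+v)*(Real.exp (2*c*u) - 1)
          - c*d^2*ε^2*(Real.exp (2*c*(u+v)) - 1)) / (Real.exp (2*c*(u+v)) - 1) := by
    have hdm := div_mul_cancel₀ (Real.exp (2*c*u) - 1) hD0
    rw [eq_div_iff hD0]
    linear_combination (-(u+v)) * hdm
  rw [hX, abs_div]
  have hnum : u*(Real.exp (2*c*(u+v)) - 1) - (u+v)*(Real.exp (2*c*u) - 1)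
      - c*d^2*ε^2*(Real.exp (2*c*(u+v)) - 1)
      = 2*c^2*(u+v)*(u*v - d^2*ε^2)
        + (u*(Real.exp (2*c*(u+v)) - (1 + 2*c*(u+v) + (2*c*(u+v))^2/2))
            - (u+v)*(Real.exp (2*c*u) - (1 + 2*c*u + (2*c*u)^2/2)))
        - c*d^2*ε^2*(Real.exp (2*c*(u+v)) - 1 - 2*c*(u+v)) := by ring
  have huv : |u*v - d^2*ε^2| ≤ 3*d*K*ε^3 := by
    have hde : (0:ℝ) ≤ d*ε := by positivity
    have e1 : 0 ≤ (K*ε^2 - (u - d*ε)) * (K*ε^2 - (v - d*ε)) :=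
      mul_nonneg (by linarith) (by linarith)
    have e2 : 0 ≤ ((u - d*ε) + K*ε^2) * ((v - d*ε) + K*ε^2) :=
      mul_nonneg (by linarith) (by linarith)
    have e3 : 0 ≤ (K*ε^2 - (u - d*ε)) * ((v - d*ε) + K*ε^2) :=
      mul_nonneg (by linarith) (by linarith)
    have e4 : 0 ≤ ((u - d*ε) + K*ε^2) * (K*ε^2 - (v - d*ε)) :=
      mul_nonneg (by linarith) (by linarith)
    have e5 : K*ε^2 * (K*ε^2) ≤ d*ε/2 * (K*ε^2) :=
      mul_le_mul_of_nonneg_right hKe (by positivity)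
    have e6 : d*ε*(u - d*ε) ≤ d*ε*(K*ε^2) := mul_le_mul_of_nonneg_left hu2 hde
    have e7 : d*ε*(v - d*ε) ≤ d*ε*(K*ε^2) := mul_le_mul_of_nonneg_left hv2 hde
    have e8 : d*ε*(-(K*ε^2)) ≤ d*ε*(u - d*ε) := mul_le_mul_of_nonneg_left hu1 hde
    have e9 : d*ε*(-(K*ε^2)) ≤ d*ε*(v - d*ε) := mul_le_mul_of_nonneg_left hv1 hde
    rw [abs_le]
    constructor
    · nlinarith
    · nlinarith
  have hnumb : |u*(Real.exp (2*c*(u+v)) - 1) - (u+v)*(Real.exp (2*c*u) - 1)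
      - c*d^2*ε^2*(Real.exp (2*c*(u+v)) - 1)|
      ≤ (24*c^2*d^2*K + 1344* |c|^3*d^4) * ε^4 := by
    rw [hnum]
    have h41 : u + v ≤ 4*d*ε := by linarith
    have b1 : |2*c^2*(u+v)*(u*v - d^2*ε^2)| ≤ 24*c^2*d^2*K*ε^4 := by
      rw [abs_mul, abs_of_nonneg (by positivity : (0:ℝ) ≤ 2*c^2*(u+v))]
      have hb : (u+v) * |u*v - d^2*ε^2| ≤ (4*d*ε) * (3*d*K*ε^3) :=
        mul_le_mul h41 huv (abs_nonneg _) (by positivity)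
      calc 2*c^2*(u+v) * |u*v - d^2*ε^2| = 2*c^2*((u+v) * |u*v - d^2*ε^2|) := by ring
        _ ≤ 2*c^2*((4*d*ε) * (3*d*K*ε^3)) :=
          mul_le_mul_of_nonneg_left hb (by positivity)
        _ = 24*c^2*d^2*K*ε^4 := by ring
    have c1 : |u*(Real.exp (2*c*(u+v)) - (1 + 2*c*(u+v) + (2*c*(u+v))^2/2))| ≤ 1024* |c|^3*d^4*ε^4 := by
      rw [abs_mul, abs_of_pos hu0]
      have hs3 : |2*c*(u+v)|^3 ≤ (8* |c| * d*ε)^3 := pow_le_pow_left₀ (abs_nonneg _) hs8 3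
      calc u * |Real.exp (2*c*(u+v)) - (1 + 2*c*(u+v) + (2*c*(u+v))^2/2)|
          ≤ (2*d*ε) * ((8* |c| * d*ε)^3) :=
            mul_le_mul huu (le_trans hRs hs3) (abs_nonneg _) (by positivity)
        _ = 1024* |c|^3*d^4*ε^4 := by ring
    have c2 : |(u+v)*(Real.exp (2*c*u) - (1 + 2*c*u + (2*c*u)^2/2))| ≤ 256* |c|^3*d^4*ε^4 := by
      rw [abs_mul, abs_of_pos hw0]
      have ht3 : |2*c*u|^3 ≤ (4* |c| * d*ε)^3 := pow_le_pow_left₀ (abs_nonneg _) ht8 3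
      calc (u+v) * |Real.exp (2*c*u) - (1 + 2*c*u + (2*c*u)^2/2)|
          ≤ (4*d*ε) * ((4* |c| * d*ε)^3) :=
            mul_le_mul h41 (le_trans hRt ht3) (abs_nonneg _) (by positivity)
        _ = 256* |c|^3*d^4*ε^4 := by ring
    have b3 : |c*d^2*ε^2*(Real.exp (2*c*(u+v)) - 1 - 2*c*(u+v))| ≤ 64* |c|^3*d^4*ε^4 := by
      rw [abs_mul]
      have hcc : |c*d^2*ε^2| = |c| * (d^2*ε^2) := by
        rw [show c*d^2*ε^2 = c*(d^2*ε^2) by ring, abs_mul,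
          abs_of_nonneg (by positivity : (0:ℝ) ≤ d^2*ε^2)]
      rw [hcc]
      have hs2 : (2*c*(u+v))^2 ≤ (8* |c| * d*ε)^2 := by
        rw [← sq_abs (2*c*(u+v))]
        exact pow_le_pow_left₀ (abs_nonneg _) hs8 2
      calc |c| * (d^2*ε^2) * |Real.exp (2*c*(u+v)) - 1 - 2*c*(u+v)|
          ≤ |c| * (d^2*ε^2) * ((8* |c| * d*ε)^2) :=
            mul_le_mul_of_nonneg_left (le_trans hDs hs2) (by positivity)
        _ = 64* |c|^3*d^4*ε^4 := by ring
    have tri1 := abs_sub (2*c^2*(u+v)*(u*v - d^2*ε^2)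
        + (u*(Real.exp (2*c*(u+v)) - (1 + 2*c*(u+v) + (2*c*(u+v))^2/2))
            - (u+v)*(Real.exp (2*c*u) - (1 + 2*c*u + (2*c*u)^2/2))))
        (c*d^2*ε^2*(Real.exp (2*c*(u+v)) - 1 - 2*c*(u+v)))
    have tri2 := abs_add_le (2*c^2*(u+v)*(u*v - d^2*ε^2))
        (u*(Real.exp (2*c*(u+v)) - (1 + 2*c*(u+v) + (2*c*(u+v))^2/2))
            - (u+v)*(Real.exp (2*c*u) - (1 + 2*c*u + (2*c*u)^2/2)))
    have tri3 := abs_sub (u*(Real.exp (2*c*(u+v)) - (1 + 2*c*(u+v) + (2*c*(u+v))^2/2)))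
        ((u+v)*(Real.exp (2*c*u) - (1 + 2*c*u + (2*c*u)^2/2)))
    linarith
  calc |u*(Real.exp (2*c*(u+v)) - 1) - (u+v)*(Real.exp (2*c*u) - 1)
          - c*d^2*ε^2*(Real.exp (2*c*(u+v)) - 1)| / |Real.exp (2*c*(u+v)) - 1|
      ≤ ((24*c^2*d^2*K + 1344* |c|^3*d^4) * ε^4) / (|c| * d*ε) :=
        div_le_div₀ (by positivity) hnumb (by positivity) hD_low
    _ = (24*c^2*d^2*K + 1344* |c|^3*d^4) / (|c| * d) * ε^3 := by
        field_simp



/- STATEMENT 15: With ã₊(ε) = a₊(ε)(1 − 2εβ₀) and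
q(ε) = exp(−b a₋(ε)/Σ)·sinh(ã₊(ε)|b|/Σ)/sinh((ã₊(ε)+a₋(ε))|b|/Σ), as ε → 0⁺ one has
ã₊(ε) − (ã₊(ε) + a₋(ε))·q(ε) = (bd²/Σ)ε² + O(ε³), and consequently
(1/b)(ã₊(ε) − (ã₊(ε) + a₋(ε))·q(ε)) = (d²/Σ)ε² + O(ε³). -/
theorem stmt_15 (d d' b Sig β₀ C ε₀ : ℝ)
    (hd : 0 < d) (hb : b ≠ 0) (hSig : 0 < Sig) (hC : 0 < C) (hε₀ : 0 < ε₀)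
    (ap am : ℝ → ℝ)
    (hap : ∀ ε : ℝ, 0 < ε → ε ≤ ε₀ → |ap ε - d * ε - d' * ε ^ 2 / 2| ≤ C * ε ^ 3)
    (ham : ∀ ε : ℝ, 0 < ε → ε ≤ ε₀ → |am ε - d * ε + d' * ε ^ 2 / 2| ≤ C * ε ^ 3) :
    ∃ ε₁ C₁ : ℝ, 0 < ε₁ ∧ ε₁ ≤ ε₀ ∧ 0 < C₁ ∧
      ∀ ε : ℝ, 0 < ε → ε ≤ ε₁ →
        0 < ap ε * (1 - 2 * ε * β₀) ∧
        0 < ap ε * (1 - 2 * ε * β₀) + am ε ∧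
        |ap ε * (1 - 2 * ε * β₀)
            - (ap ε * (1 - 2 * ε * β₀) + am ε) *
              (Real.exp (-(b * am ε) / Sig) *
                Real.sinh (ap ε * (1 - 2 * ε * β₀) * |b| / Sig) /
                Real.sinh ((ap ε * (1 - 2 * ε * β₀) + am ε) * |b| / Sig))
            - b * d ^ 2 / Sig * ε ^ 2| ≤ C₁ * ε ^ 3 ∧
        |1 / b *
              (ap ε * (1 - 2 * ε * β₀)
                - (ap ε * (1 - 2 * ε * β₀) + am ε) *
                  (Real.exp (-(b * am ε) / Sig) *
                    Real.sinh (ap ε * (1 - 2 * ε * β₀) * |b| / Sig) /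
                    Real.sinh ((ap ε * (1 - 2 * ε * β₀) + am ε) * |b| / Sig)))
            - d ^ 2 / Sig * ε ^ 2| ≤ C₁ * ε ^ 3 := by
  have hc : b / Sig ≠ 0 := div_ne_zero hb hSig.ne'
  have hcabs : 0 < |b / Sig| := abs_pos.mpr hc
  have hbabs : 0 < |b| := abs_pos.mpr hb
  obtain ⟨K, hK_def⟩ : ∃ K : ℝ, K = |d'|/2 + 2* |β₀| * d + 2*C + |β₀| * |d'| + C + 1 := ⟨_, rfl⟩
  have hK : 1 ≤ K := by
    rw [hK_def]
    have h1 := abs_nonneg d'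
    have h2 := abs_nonneg β₀
    nlinarith [mul_nonneg h2 h1, mul_nonneg h2 hd.le]
  have hK0 : 0 < K := lt_of_lt_of_le one_pos hK
  obtain ⟨A, hA_def⟩ : ∃ A : ℝ, A = (24*(b/Sig)^2*d^2*K + 1344* |b/Sig|^3*d^4) / (|b/Sig| * d) :=
    ⟨_, rfl⟩
  have hA0 : 0 < A := by
    rw [hA_def]
    apply div_pos
    · have hsq : 0 < (b/Sig)^2 := by positivity
      nlinarith [mul_pos (mul_pos hsq (pow_pos hd 2)) hK0,
        mul_pos (pow_pos hcabs 3) (pow_pos hd 4)]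
    · positivity
  have hAb : 0 < A/|b| := div_pos hA0 hbabs
  refine ⟨min ε₀ (min 1 (min (d/(2*K)) (min (1/(16*(|b/Sig|+1)*d)) (1/(2* |β₀|+1))))),
    A + A/|b| + 1, ?_, ?_, ?_, ?_⟩
  · have h1 : 0 < d/(2*K) := div_pos hd (by linarith)
    have h2 : (0:ℝ) < 1/(16*(|b/Sig|+1)*d) := by positivity
    have h3 : (0:ℝ) < 1/(2* |β₀|+1) := by positivity
    exact lt_min hε₀ (lt_min one_pos (lt_min h1 (lt_min h2 h3)))
  · exact min_le_left _ _
  · linarith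
  intro ε hε hεle
  have hεε₀ : ε ≤ ε₀ := le_trans hεle (min_le_left _ _)
  have hε1 : ε ≤ 1 := le_trans hεle (le_trans (min_le_right _ _) (min_le_left _ _))
  have hεdK : ε ≤ d/(2*K) := le_trans hεle (le_trans (min_le_right _ _)
    (le_trans (min_le_right _ _) (min_le_left _ _)))
  have hεc : ε ≤ 1/(16*(|b/Sig|+1)*d) := le_trans hεle (le_trans (min_le_right _ _)
    (le_trans (min_le_right _ _) (le_trans (min_le_right _ _) (min_le_left _ _))))
  have hεβ : ε ≤ 1/(2* |β₀|+1) := le_trans hεle (le_trans (min_le_right _ _)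
    (le_trans (min_le_right _ _) (le_trans (min_le_right _ _) (min_le_right _ _))))
  have hε32 : ε^3 ≤ ε^2 := by nlinarith
  have hβ : ε * (2* |β₀|+1) ≤ 1 := by
    rw [← le_div_iff₀ (by positivity)]; exact hεβ
  have hfac : |1 - 2*ε*β₀| ≤ 2 := by
    rw [abs_le]
    constructor <;>
      nlinarith [mul_le_mul_of_nonneg_left (le_abs_self β₀) hε.le,
        mul_le_mul_of_nonneg_left (neg_abs_le β₀) hε.le]
  have hrp := hap ε hε hεε₀
  have hrm := ham ε hε hεε₀
  -- bound |u - d ε|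
  have hu : |ap ε * (1 - 2*ε*β₀) - d*ε| ≤ K*ε^2 := by
    have hdec : ap ε * (1 - 2*ε*β₀) - d*ε
        = (ap ε - d*ε - d'*ε^2/2)*(1-2*ε*β₀) + ((d'/2 - 2*β₀*d)*ε^2 - β₀*d'*ε^3) := by
      ring
    rw [hdec]
    have t1 : |(ap ε - d*ε - d'*ε^2/2)*(1-2*ε*β₀)| ≤ 2*C*ε^3 := by
      rw [abs_mul]
      calc |ap ε - d*ε - d'*ε^2/2| * |1 - 2*ε*β₀| ≤ (C*ε^3) * 2 := by
            apply mul_le_mul ?_ hfac (abs_nonneg _) (by positivity)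
            calc |ap ε - d*ε - d'*ε^2/2| = |ap ε - d*ε - d'*ε^2/2| := rfl
              _ ≤ C*ε^3 := by
                have : ap ε - d*ε - d'*ε^2/2 = ap ε - d * ε - d' * ε ^ 2 / 2 := by ring
                rw [this]; exact hrp
        _ = 2*C*ε^3 := by ring
    have t2 : |(d'/2 - 2*β₀*d)*ε^2 - β₀*d'*ε^3| ≤ (|d'|/2 + 2* |β₀| * d)*ε^2 + |β₀| * |d'| * ε^3 := by
      have s1 : |(d'/2 - 2*β₀*d)*ε^2| ≤ (|d'|/2 + 2* |β₀| * d)*ε^2 := by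
        rw [abs_mul, abs_of_nonneg (by positivity : (0:ℝ) ≤ ε^2)]
        apply mul_le_mul_of_nonneg_right ?_ (by positivity)
        rw [abs_le]
        constructor <;>
          nlinarith [le_abs_self d', neg_abs_le d', le_abs_self β₀, neg_abs_le β₀,
            mul_le_mul_of_nonneg_right (le_abs_self β₀) hd.le,
            mul_le_mul_of_nonneg_right (neg_abs_le β₀) hd.le]
      have s2 : |β₀*d'*ε^3| = |β₀| * |d'| * ε^3 := by
        rw [abs_mul, abs_mul, abs_of_nonneg (by positivity : (0:ℝ) ≤ ε^3)]
      calc |(d'/2 - 2*β₀*d)*ε^2 - β₀*d'*ε^3|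
          ≤ |(d'/2 - 2*β₀*d)*ε^2| + |β₀*d'*ε^3| := abs_sub _ _
        _ ≤ (|d'|/2 + 2* |β₀| * d)*ε^2 + |β₀| * |d'| * ε^3 := by rw [s2]; linarith
    calc |(ap ε - d*ε - d'*ε^2/2)*(1-2*ε*β₀) + ((d'/2 - 2*β₀*d)*ε^2 - β₀*d'*ε^3)|
        ≤ |(ap ε - d*ε - d'*ε^2/2)*(1-2*ε*β₀)| + |(d'/2 - 2*β₀*d)*ε^2 - β₀*d'*ε^3| :=
          abs_add_le _ _
      _ ≤ K*ε^2 := by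
          have hC3 : 2*C*ε^3 ≤ 2*C*ε^2 := by nlinarith
          have hβd : |β₀| * |d'| * ε^3 ≤ |β₀| * |d'| * ε^2 := by
            have := mul_nonneg (abs_nonneg β₀) (abs_nonneg d')
            nlinarith
          rw [hK_def]; nlinarith [sq_nonneg ε]
  have hv : |am ε - d*ε| ≤ K*ε^2 := by
    have hdec : am ε - d*ε = (am ε - d*ε + d'*ε^2/2) - d'/2*ε^2 := by ring
    rw [hdec]
    have s1 : |am ε - d*ε + d'*ε^2/2| ≤ C*ε^3 := by
      have : am ε - d*ε + d'*ε^2/2 = am ε - d * ε + d' * ε ^ 2 / 2 := by ring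
      rw [this]; exact hrm
    have s2 : |d'/2*ε^2| ≤ |d'|/2*ε^2 := by
      rw [abs_mul, abs_of_nonneg (by positivity : (0:ℝ) ≤ ε^2)]
      apply mul_le_mul_of_nonneg_right ?_ (by positivity)
      rw [abs_div]; simp
    calc |(am ε - d*ε + d'*ε^2/2) - d'/2*ε^2|
        ≤ |am ε - d*ε + d'*ε^2/2| + |d'/2*ε^2| := abs_sub _ _
      _ ≤ K*ε^2 := by
          have hC3 : C*ε^3 ≤ C*ε^2 := by nlinarith
          have h1 := abs_nonneg d'
          have h2 := abs_nonneg β₀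
          rw [hK_def]
          nlinarith [mul_nonneg h2 h1, mul_nonneg h2 hd.le, sq_nonneg ε]
  obtain ⟨hu0, hw0, hbound⟩ := main_est (b/Sig) d K ε (ap ε * (1 - 2*ε*β₀)) (am ε)
    hc hd hK hε hu hv hεdK hεc
  rw [← hA_def] at hbound
  have hq := id1 b Sig (ap ε * (1 - 2*ε*β₀)) (am ε) hb hSig hw0
  have hA3 : A*ε^3 ≤ (A + A/|b| + 1)*ε^3 := by
    nlinarith [pow_pos hε 3, mul_pos hAb (pow_pos hε 3)]
  refine ⟨hu0, hw0, ?_, ?_⟩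
  · rw [hq]
    rw [show b * d ^ 2 / Sig = (b/Sig)*d^2 by ring]
    calc |ap ε * (1 - 2*ε*β₀) - (ap ε * (1 - 2*ε*β₀) + am ε) *
            ((Real.exp (2*(b/Sig)*(ap ε * (1 - 2*ε*β₀))) - 1) /
              (Real.exp (2*(b/Sig)*(ap ε * (1 - 2*ε*β₀) + am ε)) - 1))
            - (b/Sig)*d^2 * ε^2| ≤ A*ε^3 := by
          have h := hbound
          convert h using 3 <;> ring
      _ ≤ (A + A/|b| + 1)*ε^3 := hA3
  · rw [hq]
    have heq : 1/b * (ap ε * (1 - 2*ε*β₀) - (ap ε * (1 - 2*ε*β₀) + am ε) *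
            ((Real.exp (2*(b/Sig)*(ap ε * (1 - 2*ε*β₀))) - 1) /
              (Real.exp (2*(b/Sig)*(ap ε * (1 - 2*ε*β₀) + am ε)) - 1)))
          - d^2/Sig * ε^2
        = 1/b * ((ap ε * (1 - 2*ε*β₀) - (ap ε * (1 - 2*ε*β₀) + am ε) *
            ((Real.exp (2*(b/Sig)*(ap ε * (1 - 2*ε*β₀))) - 1) /
              (Real.exp (2*(b/Sig)*(ap ε * (1 - 2*ε*β₀) + am ε)) - 1)))
          - (b/Sig)*d^2*ε^2) := by
      field_simp
    rw [heq, abs_mul]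
    have h1b : |1/b| = 1/|b| := by rw [abs_div, abs_one]
    rw [h1b]
    have hZ : |ap ε * (1 - 2*ε*β₀) - (ap ε * (1 - 2*ε*β₀) + am ε) *
            ((Real.exp (2*(b/Sig)*(ap ε * (1 - 2*ε*β₀))) - 1) /
              (Real.exp (2*(b/Sig)*(ap ε * (1 - 2*ε*β₀) + am ε)) - 1))
          - (b/Sig)*d^2*ε^2| ≤ A*ε^3 := by
      convert hbound using 3 <;> ring
    calc 1/|b| * |ap ε * (1 - 2*ε*β₀) - (ap ε * (1 - 2*ε*β₀) + am ε) *
            ((Real.exp (2*(b/Sig)*(ap ε * (1 - 2*ε*β₀))) - 1) /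
              (Real.exp (2*(b/Sig)*(ap ε * (1 - 2*ε*β₀) + am ε)) - 1))
          - (b/Sig)*d^2*ε^2|
        ≤ 1/|b| * (A*ε^3) := by
          apply mul_le_mul_of_nonneg_left hZ (by positivity)
      _ = (A/|b|)*ε^3 := by ring
      _ ≤ (A + A/|b| + 1)*ε^3 := by nlinarith [pow_pos hε 3, mul_pos hA0 (pow_pos hε 3)]
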